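/- Assume b = −e and b ≠ 0 (with a, d ∈ ℝ arbitrary). Let u be a solution of the Longstaff–Schwartz equation on Ω, and let ε ∈ ℝ. Then the function w(x,y,t) = (1 + bε·e^{bt})^{-2a} · exp( 2b²ε·e^{bt}·x/(1 + bε·e^{bt}) ) · u( x/(1 + bε·e^{bt}), y/(1 + bε·e^{bt}), t − ln(1 + bε·e^{bt})/b ) satisfies the Longstaff–Schwartz equation at every point (x,y,t) ∈ Ω with 1 + bε·e^{bt} > 0. -/

import Mathlib

/-- Partial derivative in `x`. -/
noncomputable def pdX (u : ℝ → ℝ → ℝ → ℝ) (x y t : ℝ) : ℝ := deriv (fun z => u z y t) x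

/-- Partial derivative in `y`. -/
noncomputable def pdY (u : ℝ → ℝ → ℝ → ℝ) (x y t : ℝ) : ℝ := deriv (fun z => u x z t) y

/-- Partial derivative in `t`. -/
noncomputable def pdT (u : ℝ → ℝ → ℝ → ℝ) (x y t : ℝ) : ℝ := deriv (fun z => u x y z) t

/-- Second partial derivative in `x`. -/
noncomputable def pdXX (u : ℝ → ℝ → ℝ → ℝ) (x y t : ℝ) : ℝ := deriv (fun z => pdX u z y t) x

/-- Second partial derivative in `y`. -/
noncomputable def pdYY (u : ℝ → ℝ → ℝ → ℝ) (x y t : ℝ) : ℝ := deriv (fun z => pdY u x z t) y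

/-- The domain `Ω = {(x,y,t) : x > 0, y > 0}`. -/
def Omega : Set (ℝ × ℝ × ℝ) := {p | 0 < p.1 ∧ 0 < p.2.1}

/-- The Longstaff–Schwartz (Kolmogorov backward) equation
`u_t = −((a−bx)·u_x + (d−ey)·u_y + (x/2)·u_xx + (y/2)·u_yy)` holds at the point `(x,y,t)`. -/
def LSEq (a b d e : ℝ) (u : ℝ → ℝ → ℝ → ℝ) (x y t : ℝ) : Prop :=
  pdT u x y t =
    -((a - b * x) * pdX u x y t + (d - e * y) * pdY u x y t +
      x / 2 * pdXX u x y t + y / 2 * pdYY u x y t)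

/-- `u` is a solution of the Longstaff–Schwartz equation on `Ω`: it is C² on `Ω` and
satisfies the equation at every point of `Ω`. -/
def IsLSSolution (a b d e : ℝ) (u : ℝ → ℝ → ℝ → ℝ) : Prop :=
  ContDiffOn ℝ 2 (fun p : ℝ × ℝ × ℝ => u p.1 p.2.1 p.2.2) Omega ∧
  ∀ x y t : ℝ, 0 < x → 0 < y → LSEq a b d e u x y t

lemma omega_open : IsOpen Omega := by
  have : Omega = (fun p : ℝ × ℝ × ℝ => p.1) ⁻¹' Set.Ioi 0 ∩
      (fun p : ℝ × ℝ × ℝ => p.2.1) ⁻¹' Set.Ioi 0 := rfl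
  rw [this]
  exact (isOpen_Ioi.preimage continuous_fst).inter
    (isOpen_Ioi.preimage (continuous_fst.comp continuous_snd))

lemma lineX (y t : ℝ) (x : ℝ) :
    HasDerivAt (fun z : ℝ => ((z, y, t) : ℝ × ℝ × ℝ)) (1, 0, 0) x :=
  HasDerivAt.prodMk (hasDerivAt_id x) (HasDerivAt.prodMk (hasDerivAt_const x y) (hasDerivAt_const x t))

lemma lineY (x t : ℝ) (y : ℝ) :
    HasDerivAt (fun z : ℝ => ((x, z, t) : ℝ × ℝ × ℝ)) (0, 1, 0) y :=
  HasDerivAt.prodMk (hasDerivAt_const y x) (HasDerivAt.prodMk (hasDerivAt_id y) (hasDerivAt_const y t))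

lemma lineT (x y : ℝ) (t : ℝ) :
    HasDerivAt (fun z : ℝ => ((x, y, z) : ℝ × ℝ × ℝ)) (0, 0, 1) t :=
  HasDerivAt.prodMk (hasDerivAt_const t x) (HasDerivAt.prodMk (hasDerivAt_const t y) (hasDerivAt_id t))

lemma sectX (u : ℝ → ℝ → ℝ → ℝ) {x y t : ℝ}
    (h : DifferentiableAt ℝ (fun p : ℝ × ℝ × ℝ => u p.1 p.2.1 p.2.2) (x, y, t)) :
    HasDerivAt (fun z => u z y t) (pdX u x y t) x ∧
      pdX u x y t = fderiv ℝ (fun p : ℝ × ℝ × ℝ => u p.1 p.2.1 p.2.2) (x, y, t) (1, 0, 0) := by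
  have hc : HasDerivAt (fun z => u z y t)
      (fderiv ℝ (fun p : ℝ × ℝ × ℝ => u p.1 p.2.1 p.2.2) (x, y, t) (1, 0, 0)) x :=
    by have := h.hasFDerivAt.comp_hasDerivAt x (lineX y t x); exact this
  exact ⟨hc.differentiableAt.hasDerivAt, hc.deriv⟩

lemma sectY (u : ℝ → ℝ → ℝ → ℝ) {x y t : ℝ}
    (h : DifferentiableAt ℝ (fun p : ℝ × ℝ × ℝ => u p.1 p.2.1 p.2.2) (x, y, t)) :
    HasDerivAt (fun z => u x z t) (pdY u x y t) y ∧
      pdY u x y t = fderiv ℝ (fun p : ℝ × ℝ × ℝ => u p.1 p.2.1 p.2.2) (x, y, t) (0, 1, 0) := by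
  have hc : HasDerivAt (fun z => u x z t)
      (fderiv ℝ (fun p : ℝ × ℝ × ℝ => u p.1 p.2.1 p.2.2) (x, y, t) (0, 1, 0)) y :=
    by have := h.hasFDerivAt.comp_hasDerivAt y (lineY x t y); exact this
  exact ⟨hc.differentiableAt.hasDerivAt, hc.deriv⟩

lemma sectT (u : ℝ → ℝ → ℝ → ℝ) {x y t : ℝ}
    (h : DifferentiableAt ℝ (fun p : ℝ × ℝ × ℝ => u p.1 p.2.1 p.2.2) (x, y, t)) :
    HasDerivAt (fun z => u x y z) (pdT u x y t) t ∧
      pdT u x y t = fderiv ℝ (fun p : ℝ × ℝ × ℝ => u p.1 p.2.1 p.2.2) (x, y, t) (0, 0, 1) := by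
  have hc : HasDerivAt (fun z => u x y z)
      (fderiv ℝ (fun p : ℝ × ℝ × ℝ => u p.1 p.2.1 p.2.2) (x, y, t) (0, 0, 1)) t :=
    by have := h.hasFDerivAt.comp_hasDerivAt t (lineT x y t); exact this
  exact ⟨hc.differentiableAt.hasDerivAt, hc.deriv⟩

lemma clm_expand (D : ℝ × ℝ × ℝ →L[ℝ] ℝ) (v : ℝ × ℝ × ℝ) :
    D v = v.1 * D (1, 0, 0) + v.2.1 * D (0, 1, 0) + v.2.2 * D (0, 0, 1) := by
  have hv : v = v.1 • ((1 : ℝ), (0 : ℝ), (0 : ℝ)) + v.2.1 • ((0 : ℝ), (1 : ℝ), (0 : ℝ))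
      + v.2.2 • ((0 : ℝ), (0 : ℝ), (1 : ℝ)) := by
    ext <;> simp
  conv_lhs => rw [hv]
  simp only [map_add, map_smul, smul_eq_mul]

set_option maxHeartbeats 4000000

/-- Symmetry of the Longstaff–Schwartz equation when `b = −e ≠ 0` (subcase 2.3, group `G₁`). -/
theorem ls_symmetry_b_eq_neg_e_G1 (a b d e : ℝ) (hbe : b = -e) (hb : b ≠ 0)
    (u : ℝ → ℝ → ℝ → ℝ) (hu : IsLSSolution a b d e u) (ε : ℝ) :
    ∀ x y t : ℝ, 0 < x → 0 < y → 1 + b * ε * Real.exp (b * t) > 0 →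
      LSEq a b d e
        (fun x y t =>
          (1 + b * ε * Real.exp (b * t)) ^ (-(2 * a)) *
            Real.exp (2 * b ^ 2 * ε * Real.exp (b * t) * x /
              (1 + b * ε * Real.exp (b * t))) *
            u (x / (1 + b * ε * Real.exp (b * t))) (y / (1 + b * ε * Real.exp (b * t)))
              (t - Real.log (1 + b * ε * Real.exp (b * t)) / b))
        x y t := by
  
  obtain ⟨hC2, hLS⟩ := hu
  intro x y t hx hy hA
  have he : e = -b := by rw [hbe]; ring
  set W : ℝ → ℝ → ℝ → ℝ := (fun x y t =>
          (1 + b * ε * Real.exp (b * t)) ^ (-(2 * a)) *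
            Real.exp (2 * b ^ 2 * ε * Real.exp (b * t) * x /
              (1 + b * ε * Real.exp (b * t))) *
            u (x / (1 + b * ε * Real.exp (b * t))) (y / (1 + b * ε * Real.exp (b * t)))
              (t - Real.log (1 + b * ε * Real.exp (b * t)) / b)) with hW_def
  set F : ℝ × ℝ × ℝ → ℝ := fun p => u p.1 p.2.1 p.2.2 with hF_def
  have hFd : ∀ p : ℝ × ℝ × ℝ, 0 < p.1 → 0 < p.2.1 → ContDiffAt ℝ 2 F p := fun p h1 h2 =>
    hC2.contDiffAt (omega_open.mem_nhds ⟨h1, h2⟩)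
  set At := 1 + b * ε * Real.exp (b * t) with hAt_def
  have hApos : (0 : ℝ) < At := hA
  have hAne : At ≠ 0 := ne_of_gt hApos
  set K := 2 * b ^ 2 * ε * Real.exp (b * t) with hK_def
  set X := x / At with hX_def
  set Y := y / At with hY_def
  set s := t - Real.log At / b with hs_def
  set C := At ^ (-(2 * a)) with hC_def
  set E := Real.exp (K * x / At) with hE_def
  set U := u X Y s with hU_def
  have hXpos : 0 < X := div_pos hx hApos
  have hYpos : 0 < Y := div_pos hy hApos
  have hP : ContDiffAt ℝ 2 F (X, Y, s) := hFd (X, Y, s) hXpos hYpos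
  have hPd : DifferentiableAt ℝ F (X, Y, s) := hP.differentiableAt two_ne_zero
  set D := fderiv ℝ F (X, Y, s) with hD_def
  obtain ⟨huX, heX⟩ := sectX u hPd
  obtain ⟨huY, heY⟩ := sectY u hPd
  obtain ⟨huT, heT⟩ := sectT u hPd
  rw [← hF_def, ← hD_def] at heX heY heT
  -- second derivatives of u exist
  have hD1 : ContDiffAt ℝ 1 (fderiv ℝ F) (X, Y, s) := hP.fderiv_right (by norm_num)
  have hDd : DifferentiableAt ℝ (fderiv ℝ F) (X, Y, s) := hD1.differentiableAt one_ne_zero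
  have hgX : DifferentiableAt ℝ (fun z => fderiv ℝ F (z, Y, s) (1, 0, 0)) X :=
    (ContinuousLinearMap.apply ℝ ℝ ((1 : ℝ), (0 : ℝ), (0 : ℝ))).differentiableAt.comp X
      (hDd.comp X (lineX Y s X).differentiableAt)
  have hevX : (fun z => pdX u z Y s) =ᶠ[nhds X] (fun z => fderiv ℝ F (z, Y, s) (1, 0, 0)) := by
    filter_upwards [Ioi_mem_nhds hXpos] with z hz
    exact (sectX u ((hFd (z, Y, s) hz hYpos).differentiableAt two_ne_zero)).2
  have hXX : HasDerivAt (fun z => pdX u z Y s) (pdXX u X Y s) X :=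
    (hgX.congr_of_eventuallyEq hevX).hasDerivAt
  have hgY : DifferentiableAt ℝ (fun z => fderiv ℝ F (X, z, s) (0, 1, 0)) Y :=
    (ContinuousLinearMap.apply ℝ ℝ ((0 : ℝ), (1 : ℝ), (0 : ℝ))).differentiableAt.comp Y
      (hDd.comp Y (lineY X s Y).differentiableAt)
  have hevY : (fun z => pdY u X z s) =ᶠ[nhds Y] (fun z => fderiv ℝ F (X, z, s) (0, 1, 0)) := by
    filter_upwards [Ioi_mem_nhds hYpos] with z hz
    exact (sectY u ((hFd (X, z, s) hXpos hz).differentiableAt two_ne_zero)).2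
  have hYY : HasDerivAt (fun z => pdY u X z s) (pdYY u X Y s) Y :=
    (hgY.congr_of_eventuallyEq hevY).hasDerivAt
  -- x-derivatives of W
  have hexpz : ∀ z : ℝ, HasDerivAt (fun w => Real.exp (K * w / At))
      (Real.exp (K * z / At) * (K / At)) z := by
    intro z
    have h : HasDerivAt (fun w : ℝ => K * w / At) (K / At) z := by
      simpa using ((hasDerivAt_id z).const_mul K).div_const At
    exact h.exp
  have hsecXz : ∀ z : ℝ, 0 < z →
      HasDerivAt (fun w => u (w / At) Y s) (pdX u (z / At) Y s * (1 / At)) z := by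
    intro z hz
    have h1 : HasDerivAt (fun w : ℝ => w / At) (1 / At) z := (hasDerivAt_id z).div_const At
    exact ((sectX u ((hFd (z / At, Y, s) (div_pos hz hApos) hYpos).differentiableAt
      two_ne_zero)).1).comp z h1
  have hderivX : ∀ z : ℝ, 0 < z → HasDerivAt
      (fun w => C * Real.exp (K * w / At) * u (w / At) Y s)
      (C * (Real.exp (K * z / At) * (K / At)) * u (z / At) Y s
        + C * Real.exp (K * z / At) * (pdX u (z / At) Y s * (1 / At))) z := fun z hz =>
    ((hexpz z).const_mul C).mul (hsecXz z hz)
  have eX : pdX W x y t = _ := (hderivX x hx).deriv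
  have hevW : (fun z => pdX W z y t) =ᶠ[nhds x] (fun z =>
      C * (Real.exp (K * z / At) * (K / At)) * u (z / At) Y s
        + C * Real.exp (K * z / At) * (pdX u (z / At) Y s * (1 / At))) := by
    filter_upwards [Ioi_mem_nhds hx] with z hz
    exact (hderivX z hz).deriv
  have hXXc : HasDerivAt (fun z => pdX u (z / At) Y s) (pdXX u X Y s * (1 / At)) x :=
    hXX.comp x ((hasDerivAt_id x).div_const At)
  have hsum : HasDerivAt (fun z =>
      C * (Real.exp (K * z / At) * (K / At)) * u (z / At) Y s
        + C * Real.exp (K * z / At) * (pdX u (z / At) Y s * (1 / At))) _ x :=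
    ((((hexpz x).mul_const (K / At)).const_mul C).mul (hsecXz x hx)).add
      (((hexpz x).const_mul C).mul (hXXc.mul_const (1 / At)))
  have eXX : pdXX W x y t = _ := hevW.deriv_eq.trans hsum.deriv
  -- y-derivatives of W
  have hsecYz : ∀ z : ℝ, 0 < z →
      HasDerivAt (fun w => u X (w / At) s) (pdY u X (z / At) s * (1 / At)) z := by
    intro z hz
    have h1 : HasDerivAt (fun w : ℝ => w / At) (1 / At) z := (hasDerivAt_id z).div_const At
    exact ((sectY u ((hFd (X, z / At, s) hXpos (div_pos hz hApos)).differentiableAt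
      two_ne_zero)).1).comp z h1
  have eY : pdY W x y t = _ := ((hsecYz y hy).const_mul (C * E)).deriv
  have hevWY : (fun z => pdY W x z t) =ᶠ[nhds y]
      (fun z => C * E * (pdY u X (z / At) s * (1 / At))) := by
    filter_upwards [Ioi_mem_nhds hy] with z hz
    exact ((hsecYz z hz).const_mul (C * E)).deriv
  have hYYc : HasDerivAt (fun z => pdY u X (z / At) s) (pdYY u X Y s * (1 / At)) y :=
    hYY.comp y ((hasDerivAt_id y).div_const At)
  have eYY : pdYY W x y t = _ :=
    hevWY.deriv_eq.trans ((hYYc.mul_const (1 / At)).const_mul (C * E)).deriv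
  -- t-derivative of W
  have hbt : HasDerivAt (fun τ : ℝ => b * τ) b t := by
    simpa using (hasDerivAt_id t).const_mul b
  have hexpbt := hbt.exp
  have hAd : HasDerivAt (fun τ => 1 + b * ε * Real.exp (b * τ))
      (b * ε * (Real.exp (b * t) * b)) t := (hexpbt.const_mul (b * ε)).const_add 1
  set A' := b * ε * (Real.exp (b * t) * b) with hA'_def
  have hCd : HasDerivAt (fun τ => (1 + b * ε * Real.exp (b * τ)) ^ (-(2 * a)))
      (A' * (-(2 * a)) * At ^ (-(2 * a) - 1)) t := hAd.rpow_const (Or.inl hAne)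
  have hNum : HasDerivAt (fun τ => 2 * b ^ 2 * ε * Real.exp (b * τ) * x)
      (2 * b ^ 2 * ε * (Real.exp (b * t) * b) * x) t :=
    (hexpbt.const_mul (2 * b ^ 2 * ε)).mul_const x
  have hArg : HasDerivAt
      (fun τ => 2 * b ^ 2 * ε * Real.exp (b * τ) * x / (1 + b * ε * Real.exp (b * τ)))
      ((2 * b ^ 2 * ε * (Real.exp (b * t) * b) * x * At - K * x * A') / At ^ 2) t :=
    hNum.div hAd hAne
  have hEd : HasDerivAt
      (fun τ => Real.exp (2 * b ^ 2 * ε * Real.exp (b * τ) * x / (1 + b * ε * Real.exp (b * τ))))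
      (E * ((2 * b ^ 2 * ε * (Real.exp (b * t) * b) * x * At - K * x * A') / At ^ 2)) t :=
    hArg.exp
  have hXc : HasDerivAt (fun τ => x / (1 + b * ε * Real.exp (b * τ)))
      ((0 * At - x * A') / At ^ 2) t := (hasDerivAt_const t x).div hAd hAne
  have hYc : HasDerivAt (fun τ => y / (1 + b * ε * Real.exp (b * τ)))
      ((0 * At - y * A') / At ^ 2) t := (hasDerivAt_const t y).div hAd hAne
  have hsc : HasDerivAt (fun τ => τ - Real.log (1 + b * ε * Real.exp (b * τ)) / b)
      (1 - A' / At / b) t := (hasDerivAt_id t).sub ((hAd.log hAne).div_const b)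
  have hγ : HasDerivAt (fun τ => ((x / (1 + b * ε * Real.exp (b * τ)),
      y / (1 + b * ε * Real.exp (b * τ)),
      τ - Real.log (1 + b * ε * Real.exp (b * τ)) / b) : ℝ × ℝ × ℝ))
      (((0 * At - x * A') / At ^ 2, (0 * At - y * A') / At ^ 2, 1 - A' / At / b)) t :=
    HasDerivAt.prodMk hXc (HasDerivAt.prodMk hYc hsc)
  have hUc : HasDerivAt (fun τ => u (x / (1 + b * ε * Real.exp (b * τ)))
      (y / (1 + b * ε * Real.exp (b * τ))) (τ - Real.log (1 + b * ε * Real.exp (b * τ)) / b))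
      (D ((0 * At - x * A') / At ^ 2, (0 * At - y * A') / At ^ 2, 1 - A' / At / b)) t :=
    by have := hPd.hasFDerivAt.comp_hasDerivAt t hγ; exact this
  have hDval : D ((0 * At - x * A') / At ^ 2, (0 * At - y * A') / At ^ 2, 1 - A' / At / b)
      = (0 * At - x * A') / At ^ 2 * pdX u X Y s + (0 * At - y * A') / At ^ 2 * pdY u X Y s
        + (1 - A' / At / b) * pdT u X Y s := by
    rw [clm_expand, ← heX, ← heY, ← heT]
  rw [hDval] at hUc
  have eT : pdT W x y t = _ := ((hCd.mul hEd).mul hUc).deriv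
  -- the PDE for u at the transformed point
  have hPDE : pdT u X Y s = -((a - b * X) * pdX u X Y s + (d - e * Y) * pdY u X Y s
      + X / 2 * pdXX u X Y s + Y / 2 * pdYY u X Y s) := hLS X Y s hXpos hYpos
  have hpow : At ^ (-(2 * a) - 1) = C / At := by
    rw [Real.rpow_sub hApos, Real.rpow_one, hC_def]
  have hAne2 : 1 + b * ε * Real.exp (b * t) ≠ 0 := hAt_def ▸ hAne
  show pdT W x y t = -((a - b * x) * pdX W x y t + (d - e * y) * pdY W x y t
      + x / 2 * pdXX W x y t + y / 2 * pdYY W x y t)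
  rw [eT, eX, eY, eXX, eYY]
  simp only [Pi.mul_apply]
  simp only [← hAt_def]
  simp only [← hX_def, ← hY_def, ← hs_def]
  simp only [← hK_def]
  simp only [← hE_def, ← hC_def, ← hU_def]
  rw [hpow, hPDE, he]
  have hxX : x = X * At := (div_mul_cancel₀ x hAne).symm
  have hyY : y = Y * At := (div_mul_cancel₀ y hAne).symm
  have hA'e : A' = b * (At - 1) := by rw [hA'_def, hAt_def]; ring
  have hKe : K = 2 * b * (At - 1) := by rw [hK_def, hAt_def]; ring
  have hQe : 2 * b ^ 2 * ε * (Real.exp (b * t) * b) = 2 * b * (At - 1) * b := by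
    rw [hAt_def]; ring
  rw [hQe, hA'e, hKe, hxX, hyY]
  field_simp
  ring
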